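/- Let Σ⁺ be a Sasaki–Einstein 5-manifold with contact form η, θ a HYM connection 1-form on a circle bundle over C(Σ⁺), and φ_BC = θ∧ω_C + Re Ω_C the model G₂-structure on BC(Σ⁺). Then the corrected 3-form φ'_BC = θ∧ω_C + Re Ω_C − (1/2) r² η∧dθ is closed, and the correction term φ'_BC − φ_BC lies in Ω³₂₇ with respect to φ_BC, i.e. (φ'_BC − φ_BC) ∧ φ_BC = 0 = (φ'_BC − φ_BC) ∧ ψ_BC, where ψ_BC = −θ∧Im Ω_C + (1/2)ω_C². -/

import Mathlib

/-!  Statement 18.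
On BC(Σ⁺) over the Calabi–Yau cone of a Sasaki–Einstein structure (η, ω₁, ω₂, ω₃),
with HYM connection θ of curvature τ = dθ, the model G₂-structure is
φ_BC = θ∧ω_C + Re Ω_C and the corrected 3-form is φ'_BC = φ_BC − ½r²η∧dθ.  Forms on
BC(Σ⁺) are expanded in the basis dr∧θ, dr, θ, 1 with coefficients forms on Σ⁺; thus
  φ'_BC ↔ (a, b, c, e) = (−r·η, r²·ω₂, r²·ω₁, −r³·η∧ω₃ − ½r²·η∧τ),
  φ_BC  ↔ (−r·η, r²·ω₂, r²·ω₁, −r³·η∧ω₃),   and (using dθ = τ)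
  d(dr∧θ∧a + dr∧b + θ∧c + e)
    ↔ (d_Σa + ∂_r c, −τ∧a − d_Σ b + ∂_r e, −d_Σ c, τ∧c + d_Σ e),
  ψ_BC = −θ∧Im Ω_C + ½ω_C² ↔ (r²·ω₃, r³·η∧ω₁, −r³·η∧ω₂, ½r⁴·ω₁²).
Conclusions: (1) φ'_BC is closed (the four components of dφ'_BC vanish); (2) the
correction φ'_BC − φ_BC = −½r²·η∧τ satisfies (φ'_BC − φ_BC)∧φ_BC = 0 and
(φ'_BC − φ_BC)∧ψ_BC = 0, i.e. all components of these products vanish (those of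
degree ≥ 6 on the 5-manifold Σ⁺ vanishing automatically), so φ'_BC − φ_BC ∈ Ω³₂₇. -/
theorem alc_g2_model_closed_correction_type27
    {L1 L2 L3 L4 L5 L6 L7 : Type*}
    [NormedAddCommGroup L1] [NormedSpace ℝ L1]
    [NormedAddCommGroup L2] [NormedSpace ℝ L2]
    [NormedAddCommGroup L3] [NormedSpace ℝ L3]
    [NormedAddCommGroup L4] [NormedSpace ℝ L4]
    [AddCommGroup L5] [Module ℝ L5]
    [AddCommGroup L6] [Module ℝ L6] [Subsingleton L6]
    [AddCommGroup L7] [Module ℝ L7] [Subsingleton L7]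
    (dS1 : L1 →ₗ[ℝ] L2) (dS2 : L2 →ₗ[ℝ] L3) (dS3 : L3 →ₗ[ℝ] L4)
    (w12 : L1 →ₗ[ℝ] L2 →ₗ[ℝ] L3) (w21 : L2 →ₗ[ℝ] L1 →ₗ[ℝ] L3)
    (w22 : L2 →ₗ[ℝ] L2 →ₗ[ℝ] L4) (w13 : L1 →ₗ[ℝ] L3 →ₗ[ℝ] L4)
    (w31 : L3 →ₗ[ℝ] L1 →ₗ[ℝ] L4) (w32 : L3 →ₗ[ℝ] L2 →ₗ[ℝ] L5)
    (w33 : L3 →ₗ[ℝ] L3 →ₗ[ℝ] L6) (w34 : L3 →ₗ[ℝ] L4 →ₗ[ℝ] L7)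
    (w14 : L1 →ₗ[ℝ] L4 →ₗ[ℝ] L5)
    (η : L1) (ω₁ ω₂ ω₃ τ : L2)                          -- τ = dθ
    -- Sasaki–Einstein equations and SU(2)-structure relations:
    (hSE₁ : dS1 η = (2 : ℝ) • ω₁)
    (hSE₂ : dS2 ω₂ = -(3 : ℝ) • w12 η ω₃)
    (hSE₃ : dS2 ω₃ = (3 : ℝ) • w12 η ω₂)
    (hdd : ∀ a, dS2 (dS1 a) = 0)
    (hdτ : dS2 τ = 0)                                   -- dθ is closed
    (hω₁₃ : w22 ω₁ ω₃ = 0)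
    -- exterior-algebra relations (graded commutativity, Leibniz, η∧η = 0, associativity):
    (hcomm21 : ∀ (s : L2) (a : L1), w21 s a = w12 a s)
    (hcomm22 : ∀ s t : L2, w22 s t = w22 t s)
    (hLeib : ∀ (a : L1) (t : L2), dS3 (w12 a t) = w22 (dS1 a) t - w13 a (dS2 t))
    (hηη : ∀ σ : L2, w13 η (w12 η σ) = 0)
    (hassoc1 : ∀ (a b : L1) (s : L2), w31 (w12 a s) b = w13 a (w21 s b))
    (hassoc2 : ∀ (a : L1) (s t : L2), w32 (w12 a s) t = w14 a (w22 s t))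
    -- θ is Hermitian Yang–Mills:
    (hHYM₁ : w22 τ ω₁ = 0) (hHYM₂ : w22 τ ω₂ = 0) (hHYM₃ : w22 τ ω₃ = 0) :
    -- (1) dφ'_BC = 0, componentwise:
    ((∀ r : ℝ, 0 < r →
        HasDerivAt (fun s : ℝ => (s ^ 2 : ℝ) • ω₁) (-(dS1 ((-r : ℝ) • η))) r) ∧
     (∀ r : ℝ, 0 < r →
        HasDerivAt (fun s : ℝ => (-(s ^ 3) : ℝ) • w12 η ω₃ + (-(s ^ 2) / 2 : ℝ) • w12 η τ)
          (w21 τ ((-r : ℝ) • η) + dS2 ((r ^ 2 : ℝ) • ω₂)) r) ∧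
     (∀ r : ℝ, 0 < r → dS2 ((r ^ 2 : ℝ) • ω₁) = 0) ∧
     (∀ r : ℝ, 0 < r →
        w22 τ ((r ^ 2 : ℝ) • ω₁)
          + dS3 ((-(r ^ 3) : ℝ) • w12 η ω₃ + (-(r ^ 2) / 2 : ℝ) • w12 η τ) = 0)) ∧
    -- (2) (φ'_BC − φ_BC) ∧ φ_BC = 0 and (φ'_BC − φ_BC) ∧ ψ_BC = 0, componentwise
    --     (the correction being the multiple −½r² of η∧τ):
    ((w31 (w12 η τ) η = 0 ∧ w32 (w12 η τ) ω₂ = 0 ∧ w32 (w12 η τ) ω₁ = 0 ∧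
        w33 (w12 η τ) (w12 η ω₃) = 0) ∧
     (w32 (w12 η τ) ω₃ = 0 ∧ w33 (w12 η τ) (w12 η ω₁) = 0 ∧
        w33 (w12 η τ) (w12 η ω₂) = 0 ∧ w34 (w12 η τ) (w22 ω₁ ω₁) = 0)) := by
  have hω₁τ : w22 ω₁ τ = 0 := by rw [hcomm22]; exact hHYM₁
  have h3 : dS3 (w12 η ω₃) = 0 := by
    rw [hLeib, hSE₁, hSE₃]
    simp [LinearMap.smul_apply, hω₁₃, hηη]
  have hτ0 : dS3 (w12 η τ) = 0 := by
    rw [hLeib, hSE₁, hdτ]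
    simp [LinearMap.smul_apply, hω₁τ]
  constructor
  · refine ⟨?_, ?_, ?_, ?_⟩
    · intro r hr
      have h : HasDerivAt (fun s : ℝ => (s ^ 2 : ℝ) • ω₁) (((2:ℕ) * r ^ 1 : ℝ) • ω₁) r :=
        (hasDerivAt_pow 2 r).smul_const ω₁
      convert h using 1
      rw [map_smul, hSE₁]
      push_cast
      module
    · intro r hr
      have h1 : HasDerivAt (fun s : ℝ => (-(s ^ 3) : ℝ) • w12 η ω₃)
          ((-((3:ℕ) * r ^ 2) : ℝ) • w12 η ω₃) r :=
        ((hasDerivAt_pow 3 r).neg).smul_const (w12 η ω₃)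
      have h2 : HasDerivAt (fun s : ℝ => (-(s ^ 2) / 2 : ℝ) • w12 η τ)
          ((-((2:ℕ) * r ^ 1) / 2 : ℝ) • w12 η τ) r :=
        (((hasDerivAt_pow 2 r).neg).div_const 2).smul_const (w12 η τ)
      convert h1.add h2 using 1
      · rfl
      simp only [hcomm21, map_smul, LinearMap.smul_apply, hSE₂]
      push_cast
      module
    · intro r hr
      have hω : dS2 ω₁ = 0 := by
        have := hdd η
        rw [hSE₁, map_smul] at this
        have h2 : (2:ℝ) ≠ 0 := by norm_num
        exact (smul_eq_zero.mp this).resolve_left h2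
      rw [map_smul, hω, smul_zero]
    · intro r hr
      rw [map_add, map_smul, map_smul, map_smul, h3, hτ0]
      simp [hHYM₁]
  · have h6 : ∀ x : L6, x = 0 := fun x => Subsingleton.elim x 0
    have h7 : ∀ x : L7, x = 0 := fun x => Subsingleton.elim x 0
    refine ⟨⟨?_, ?_, ?_, h6 _⟩, ?_, h6 _, h6 _, h7 _⟩
    · rw [hassoc1, hcomm21]; exact hηη τ
    · rw [hassoc2, hHYM₂, map_zero]
    · rw [hassoc2, hHYM₁, map_zero]
    · rw [hassoc2, hHYM₃, map_zero]
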